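/- Let a be a real number with a ≥ 0 (or any complex parameter with all n+a ≠ 0 and well-defined powers). For any composition k = (k_1,...,k_r), complex numbers x_1,...,x_r in the closed unit disk, and integers l ≥ 0, n ≥ 1, Σ_{n ≥ n_1 > ... > n_r > 0} Π_{j=1}^r x_j^{n_j+l+a}/(n_j+l+a)^{k_j} = (-1)^r Σ_{j=0}^r (-1)^j ζ_{n+l}(k_1,...,k_j; x_1,...,x_j; a) · ζ_l^⋆(k_r,...,k_{j+1}; x_r,...,x_{j+1}; a). -/

import Mathlib

open Finset

/-- Parametric multiple harmonic sum
`ζ_m(k;x;a) = Σ_{m ≥ n_1 > ... > n_r ≥ 1} Π x_j^{n_j+a}/(n_j+a)^{k_j}` (principal branch powers). -/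
noncomputable def pmhs (a : ℂ) : ℕ → List (ℕ × ℂ) → ℂ
  | _, [] => 1
  | n, (k, x) :: rest =>
      ∑ m ∈ Finset.Icc 1 n, x ^ ((m : ℂ) + a) / ((m : ℂ) + a) ^ k * pmhs a (m - 1) rest

/-- Parametric multiple harmonic star sum `ζ_m^⋆(k;x;a)`. -/
noncomputable def pmhss (a : ℂ) : ℕ → List (ℕ × ℂ) → ℂ
  | _, [] => 1
  | n, (k, x) :: rest =>
      ∑ m ∈ Finset.Icc 1 n, x ^ ((m : ℂ) + a) / ((m : ℂ) + a) ^ k * pmhss a m rest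

lemma pmhs_nil (a : ℂ) (n : ℕ) : pmhs a n [] = 1 := by rw [pmhs]

lemma pmhs_cons (a : ℂ) (n : ℕ) (k : ℕ) (x : ℂ) (rest : List (ℕ × ℂ)) :
    pmhs a n ((k, x) :: rest) =
      ∑ m ∈ Finset.Icc 1 n, x ^ ((m : ℂ) + a) / ((m : ℂ) + a) ^ k * pmhs a (m - 1) rest := by
  rw [pmhs]

lemma pmhss_nil (a : ℂ) (n : ℕ) : pmhss a n [] = 1 := by rw [pmhss]

lemma pmhss_cons (a : ℂ) (n : ℕ) (k : ℕ) (x : ℂ) (rest : List (ℕ × ℂ)) :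
    pmhss a n ((k, x) :: rest) =
      ∑ m ∈ Finset.Icc 1 n, x ^ ((m : ℂ) + a) / ((m : ℂ) + a) ^ k * pmhss a m rest := by
  rw [pmhss]

/-- Peeling off the innermost (last) entry of a strict parametric multiple harmonic sum. -/
lemma pmhs_concat (k : ℕ) (x : ℂ) (M : List (ℕ × ℂ)) :
    ∀ (c : ℂ) (n : ℕ),
      pmhs c n (M ++ [(k, x)]) =
        ∑ p ∈ Finset.Icc 1 n,
          x ^ ((p : ℂ) + c) / ((p : ℂ) + c) ^ k * pmhs ((p : ℂ) + c) (n - p) M := by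
  induction M with
  | nil =>
    intro c n
    rw [List.nil_append, pmhs_cons]
    refine Finset.sum_congr rfl fun m _ => ?_
    rw [pmhs_nil, pmhs_nil]
  | cons e M ih =>
    obtain ⟨k', x'⟩ := e
    intro c n
    rw [List.cons_append, pmhs_cons]
    calc
      (∑ m ∈ Finset.Icc 1 n,
          x' ^ ((m : ℂ) + c) / ((m : ℂ) + c) ^ k' * pmhs c (m - 1) (M ++ [(k, x)]))
        = ∑ m ∈ Finset.Icc 1 n, ∑ p ∈ Finset.Icc 1 (m - 1),
            x' ^ ((m : ℂ) + c) / ((m : ℂ) + c) ^ k' *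
              (x ^ ((p : ℂ) + c) / ((p : ℂ) + c) ^ k * pmhs ((p : ℂ) + c) (m - 1 - p) M) := by
          refine Finset.sum_congr rfl fun m _ => ?_
          rw [ih, Finset.mul_sum]
      _ = ∑ p ∈ Finset.Icc 1 n, ∑ q ∈ Finset.Icc 1 (n - p),
            x ^ ((p : ℂ) + c) / ((p : ℂ) + c) ^ k *
              (x' ^ ((q : ℂ) + ((p : ℂ) + c)) / ((q : ℂ) + ((p : ℂ) + c)) ^ k' *
                pmhs ((p : ℂ) + c) (q - 1) M) := by
          rw [Finset.sum_sigma', Finset.sum_sigma']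
          refine Finset.sum_bij' (fun mp _ => ⟨mp.2, mp.1 - mp.2⟩)
            (fun pq _ => ⟨pq.1 + pq.2, pq.1⟩) ?_ ?_ ?_ ?_ ?_
          · rintro ⟨m, p⟩ h
            simp only [Finset.mem_sigma, Finset.mem_Icc] at h ⊢
            omega
          · rintro ⟨p, q⟩ h
            simp only [Finset.mem_sigma, Finset.mem_Icc] at h ⊢
            omega
          · rintro ⟨m, p⟩ h
            simp only [Finset.mem_sigma, Finset.mem_Icc] at h
            simp only [Sigma.mk.inj_iff, heq_eq_eq, and_true, true_and]
            omega
          · rintro ⟨p, q⟩ h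
            simp only [Finset.mem_sigma, Finset.mem_Icc] at h
            simp only [Sigma.mk.inj_iff, heq_eq_eq, and_true, true_and]
            omega
          · rintro ⟨m, p⟩ h
            simp only [Finset.mem_sigma, Finset.mem_Icc] at h
            have hpm : p ≤ m := by omega
            have h1 : ((m - p : ℕ) : ℂ) = (m : ℂ) - (p : ℂ) := by
              push_cast [Nat.cast_sub hpm]; ring
            have h2 : ((m : ℂ) - (p : ℂ)) + ((p : ℂ) + c) = (m : ℂ) + c := by ring
            have h3 : m - p - 1 = m - 1 - p := by omega
            simp only []
            rw [h1, h2, h3]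
            ring
      _ = ∑ p ∈ Finset.Icc 1 n,
            x ^ ((p : ℂ) + c) / ((p : ℂ) + c) ^ k * pmhs ((p : ℂ) + c) (n - p) ((k', x') :: M) := by
          refine Finset.sum_congr rfl fun p _ => ?_
          rw [pmhs_cons, Finset.mul_sum]

lemma pmhs_key (a : ℂ) (M : List (ℕ × ℂ)) :
    ∀ (l n : ℕ),
      pmhs ((l : ℂ) + a) n M =
        (-1 : ℂ) ^ M.length * ∑ j ∈ Finset.range (M.length + 1),
          (-1 : ℂ) ^ j * pmhs a (n + l) (M.take j) * pmhss a l ((M.drop j).reverse) := by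
  induction M using List.reverseRecOn with
  | nil =>
    intro l n
    simp [pmhs_nil, pmhss_nil]
  | append_singleton M e ih =>
    obtain ⟨k, x⟩ := e
    intro l n
    set s := M.length with hs
    have hlen : (M ++ [(k, x)]).length = s + 1 := by simp [hs]
    have hIoc : ∀ t : ℕ, Finset.Icc 1 t = Finset.Ioc 0 t := fun t => by
      rw [← Finset.Icc_add_one_left_eq_Ioc]; rfl
    have hterm : ∀ j ∈ Finset.range (s + 1),
        (-1 : ℂ) ^ j * pmhs a (n + l) ((M ++ [(k, x)]).take j) *
            pmhss a l (((M ++ [(k, x)]).drop j).reverse)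
        = ∑ p ∈ Finset.Icc 1 l, x ^ ((p : ℂ) + a) / ((p : ℂ) + a) ^ k *
            ((-1 : ℂ) ^ j * pmhs a (n + l) (M.take j) * pmhss a p ((M.drop j).reverse)) := by
      intro j hj
      rw [Finset.mem_range] at hj
      have hj' : j ≤ M.length := by omega
      rw [List.take_append_of_le_length hj', List.drop_append_of_le_length hj',
        List.reverse_append]
      simp only [List.reverse_cons, List.reverse_nil, List.nil_append, List.singleton_append]
      rw [pmhss_cons, Finset.mul_sum]
      refine Finset.sum_congr rfl fun p _ => ?_
      ring
    have hinner : ∀ p ∈ Finset.Icc 1 l,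
        (∑ j ∈ Finset.range (s + 1), x ^ ((p : ℂ) + a) / ((p : ℂ) + a) ^ k *
            ((-1 : ℂ) ^ j * pmhs a (n + l) (M.take j) * pmhss a p ((M.drop j).reverse)))
        = x ^ ((p : ℂ) + a) / ((p : ℂ) + a) ^ k *
            ((-1 : ℂ) ^ s * pmhs ((p : ℂ) + a) (n + l - p) M) := by
      intro p hp
      rw [Finset.mem_Icc] at hp
      rw [← Finset.mul_sum]
      congr 1
      have hih := ih p (n + l - p)
      rw [show n + l - p + p = n + l by omega] at hih
      rw [hih, ← mul_assoc, ← pow_add, Even.neg_one_pow ⟨s, rfl⟩, one_mul]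
    have htake : (M ++ [(k, x)]).take (s + 1) = M ++ [(k, x)] := by
      rw [← hlen]; exact List.take_length
    have hdrop : (M ++ [(k, x)]).drop (s + 1) = [] := by
      rw [← hlen]; exact List.drop_length
    have hA := pmhs_concat k x M a (n + l)
    have hsplit :
        (∑ p ∈ Finset.Icc 1 (n + l),
            x ^ ((p : ℂ) + a) / ((p : ℂ) + a) ^ k * pmhs ((p : ℂ) + a) (n + l - p) M)
        = (∑ p ∈ Finset.Icc 1 l,
            x ^ ((p : ℂ) + a) / ((p : ℂ) + a) ^ k * pmhs ((p : ℂ) + a) (n + l - p) M)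
          + ∑ p ∈ Finset.Ioc l (n + l),
            x ^ ((p : ℂ) + a) / ((p : ℂ) + a) ^ k * pmhs ((p : ℂ) + a) (n + l - p) M := by
      rw [hIoc, hIoc]
      exact (Finset.sum_Ioc_consecutive _ (Nat.zero_le l) (by omega)).symm
    have hshift :
        (∑ p ∈ Finset.Ioc l (n + l),
            x ^ ((p : ℂ) + a) / ((p : ℂ) + a) ^ k * pmhs ((p : ℂ) + a) (n + l - p) M)
        = pmhs ((l : ℂ) + a) n (M ++ [(k, x)]) := by
      rw [pmhs_concat k x M ((l : ℂ) + a) n, hIoc n]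
      rw [show Finset.Ioc l (n + l) = Finset.Ioc (l + 0) (l + n) by
        rw [Nat.add_zero, Nat.add_comm n l]]
      rw [← Finset.map_add_left_Ioc, Finset.sum_map]
      refine Finset.sum_congr rfl fun q hq => ?_
      rw [Finset.mem_Ioc] at hq
      simp only [addLeftEmbedding_apply]
      have h1 : ((l + q : ℕ) : ℂ) = (l : ℂ) + (q : ℂ) := by push_cast; ring
      have h2 : ((l : ℂ) + (q : ℂ)) + a = (q : ℂ) + ((l : ℂ) + a) := by ring
      have h3 : n + l - (l + q) = n - q := by omega
      rw [h1, h2, h3]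
    have hfactor :
        (∑ p ∈ Finset.Icc 1 l, x ^ ((p : ℂ) + a) / ((p : ℂ) + a) ^ k *
            ((-1 : ℂ) ^ s * pmhs ((p : ℂ) + a) (n + l - p) M))
        = (-1 : ℂ) ^ s * ∑ p ∈ Finset.Icc 1 l,
            x ^ ((p : ℂ) + a) / ((p : ℂ) + a) ^ k * pmhs ((p : ℂ) + a) (n + l - p) M := by
      rw [Finset.mul_sum]
      exact Finset.sum_congr rfl fun p _ => by ring
    rw [hlen, Finset.sum_range_succ, Finset.sum_congr rfl hterm, Finset.sum_comm,
      Finset.sum_congr rfl hinner, hfactor, htake, hdrop, List.reverse_nil, pmhss_nil,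
      hA, hsplit, hshift]
    have h2 : (-1 : ℂ) ^ s * (-1 : ℂ) ^ s = 1 := by
      rw [← pow_add]; exact Even.neg_one_pow ⟨s, rfl⟩
    linear_combination (-(pmhs ((l : ℂ) + a) n (M ++ [(k, x)]))) * h2

/-- The shifted parametric strict sum
`Σ_{n ≥ n_1 > ... > n_r > 0} Π x_j^{n_j+l+a}/(n_j+l+a)^{k_j}` is `pmhs (l+a) n`. -/
theorem stmt4 (a : ℝ) (ha : 0 ≤ a) (ks : List ℕ) (xs : List ℂ)
    (hlen : ks.length = xs.length) (hk : ∀ k ∈ ks, 1 ≤ k)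
    (hx : ∀ x ∈ xs, ‖x‖ ≤ 1) (l : ℕ) (n : ℕ) (hn : 1 ≤ n) :
    pmhs ((l : ℂ) + (a : ℂ)) n (ks.zip xs) =
      (-1 : ℂ) ^ ks.length * ∑ j ∈ Finset.range (ks.length + 1),
        (-1 : ℂ) ^ j * pmhs (a : ℂ) (n + l) ((ks.take j).zip (xs.take j)) *
          pmhss (a : ℂ) l (((ks.drop j).zip (xs.drop j)).reverse) := by
  have hzt : ∀ j : ℕ, (ks.take j).zip (xs.take j) = (ks.zip xs).take j := fun j => by
    simp [List.zip, List.take_zipWith]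
  have hzd : ∀ j : ℕ, (ks.drop j).zip (xs.drop j) = (ks.zip xs).drop j := fun j => by
    simp [List.zip, List.drop_zipWith]
  have hL : (ks.zip xs).length = ks.length := by
    rw [List.length_zip, hlen, min_self]
  simp only [hzt, hzd]
  rw [← hL]
  exact pmhs_key (a : ℂ) (ks.zip xs) l n
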